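/- Let G be an arena with vertex set V and let k ≥ 1. Every finite word w over V with |w| ≥ k^{|V|} satisfies maxscore_{2^V}(w) ≥ k. -/

import Mathlib

/- Common definitions for finite-time Muller games, following
   McNaughton / Fearnley-Zimmermann. -/

universe u

variable {V : Type u}

/-- The occurrence set of a finite word: the set of letters occurring in it. -/
def occ (x : List V) : Set V := {v | v ∈ x}

/-- `score F w` is the maximal `k` such that some suffix of `w` decomposes as
`x₁ ⋯ x_k` with every `xᵢ` non-empty and `occ xᵢ = F` (with `max ∅ = 0`). -/
noncomputable def score (F : Set V) (w : List V) : ℕ :=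
  sSup {k | ∃ xs : List (List V), xs.length = k ∧
    (∀ x ∈ xs, x ≠ [] ∧ occ x = F) ∧ xs.flatten <:+ w}

/-- `maxscore 𝓕 w` is the maximum of `score F u` over `F ∈ 𝓕` and non-empty
prefixes `u` of `w`. -/
noncomputable def maxscore (𝓕 : Set (Set V)) (w : List V) : ℕ :=
  sSup {n | ∃ F ∈ 𝓕, ∃ u : List V, u ≠ [] ∧ u <+: w ∧ n = score F u}

/-- `AccGood F w x` : `x` is a suffix of `w` with `occ x ⊆ F` such that removing
any suffix `y` of `x` from `w` does not change the score of `F`. -/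
def AccGood (F : Set V) (w x : List V) : Prop :=
  x <:+ w ∧ occ x ⊆ F ∧
    ∀ y : List V, y <:+ x → score F (w.take (w.length - y.length)) = score F w

/-- The accumulator `acc F w` : the occurrence set of the longest suffix `x` of `w`
with `occ x ⊆ F` such that the score of `F` did not change during `x`. -/
noncomputable def acc (F : Set V) (w : List V) : Set V :=
  occ (w.drop (sInf {i | AccGood F w (w.drop i)}))

/-- A non-empty word `w` is an `𝓕`-burden if `maxscore 𝓕 w ≤ 2` and for every
`F ∈ 𝓕` either `score F w = 0`, or `score F w = 1` and `acc F w = ∅`. -/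
def Burden (𝓕 : Set (Set V)) (w : List V) : Prop :=
  w ≠ [] ∧ maxscore 𝓕 w ≤ 2 ∧
    ∀ F ∈ 𝓕, score F w = 0 ∨ (score F w = 1 ∧ acc F w = ∅)

/-- The maxscore of an infinite sequence: the supremum (in `ℕ∞`) of the scores of
sets `F ∈ 𝓕` over all non-empty finite prefixes. -/
noncomputable def maxscoreInf (𝓕 : Set (Set V)) (ρ : ℕ → V) : ℕ∞ :=
  ⨆ F ∈ 𝓕, ⨆ n : ℕ, (score F ((List.range (n + 1)).map ρ) : ℕ∞)

/-- The set of elements occurring infinitely often in the sequence `ρ`. -/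
def limitSet (ρ : ℕ → V) : Set V := {v | ∀ N : ℕ, ∃ n, N ≤ n ∧ ρ n = v}

/-- The indicator of a play: the union of all `F ∈ 𝓕` with positive score
together with all non-empty accumulators of members of `𝓕`. -/
noncomputable def ind (𝓕 : Set (Set V)) (w : List V) : Set V :=
  (⋃ F ∈ {F ∈ 𝓕 | 0 < score F w}, F) ∪ ⋃ F ∈ {F ∈ 𝓕 | acc F w ≠ ∅}, acc F w

/-- An arena: a finite directed graph together with the set `V0` of vertices of
Player 0 (Player 1 owns the complement), where every vertex has a successor. -/
structure Arena (V : Type u) where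
  V0 : Set V
  E : V → V → Prop
  exists_succ : ∀ v, ∃ u, E v u

/-- The positions of Player `i`. -/
def Arena.pos (G : Arena V) (i : Fin 2) : Set V :=
  if i = 0 then G.V0 else G.V0ᶜ

/-- A strategy maps a history (the play so far, excluding the current vertex)
and the current vertex to a successor vertex. -/
abbrev Strategy (V : Type u) := List V → V → V

/-- A strategy is legal if it always moves along edges. -/
def Arena.Legal (G : Arena V) (σ : Strategy V) : Prop :=
  ∀ w v, G.E v (σ w v)

/-- An infinite play in `G` starting in `v`. -/
def Arena.IsPlay (G : Arena V) (v : V) (ρ : ℕ → V) : Prop :=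
  ρ 0 = v ∧ ∀ n, G.E (ρ n) (ρ (n + 1))

/-- An infinite play is consistent with the strategy `σ` of Player `i`. -/
def Arena.ConsistentInf (G : Arena V) (i : Fin 2) (σ : Strategy V) (ρ : ℕ → V) : Prop :=
  ∀ n, ρ n ∈ G.pos i → ρ (n + 1) = σ ((List.range n).map ρ) (ρ n)

/-- Player `i` (with winning condition `𝓕i`) wins the Muller game from `v`. -/
def Arena.MullerWinFrom (G : Arena V) (i : Fin 2) (𝓕i : Set (Set V)) (v : V) : Prop :=
  ∃ σ : Strategy V, G.Legal σ ∧
    ∀ ρ : ℕ → V, G.IsPlay v ρ → G.ConsistentInf i σ ρ → limitSet ρ ∈ 𝓕i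

/-- The winning region of Player `i` in the Muller game. -/
def Arena.MullerWinRegion (G : Arena V) (i : Fin 2) (𝓕i : Set (Set V)) : Set V :=
  {v | G.MullerWinFrom i 𝓕i v}

/-- A finite play is consistent with the strategy `σ` of Player `i`. -/
def Arena.ConsistentFin (G : Arena V) (i : Fin 2) (σ : Strategy V) (w : List V) : Prop :=
  ∀ (u : List V) (v x : V), u ++ [v, x] <+: w → v ∈ G.pos i → x = σ u v

/-- A play of the finite-time Muller game with threshold `k`: a finite path
whose maxscore (over all subsets) is exactly `k`, while the maxscore of
its proper prefixes is `< k`. -/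
def FTPlay (G : Arena V) (k : ℕ) (w : List V) : Prop :=
  w.Chain' G.E ∧ maxscore (Set.univ : Set (Set V)) w = k ∧
    maxscore (Set.univ : Set (Set V)) w.dropLast < k

/-- Player `i` wins the finite-time Muller game with threshold `k` from `v`. -/
def FTWinFrom (G : Arena V) (i : Fin 2) (𝓕i : Set (Set V)) (k : ℕ) (v : V) : Prop :=
  ∃ σ : Strategy V, G.Legal σ ∧
    ∀ w : List V, FTPlay G k w → w.head? = some v → G.ConsistentFin i σ w →
      ∃ F ∈ 𝓕i, score F w = k

/-- The winning region of Player `i` in the finite-time Muller game. -/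
def FTWinRegion (G : Arena V) (i : Fin 2) (𝓕i : Set (Set V)) (k : ℕ) : Set V :=
  {v | FTWinFrom G i 𝓕i k v}

/-- A play of McNaughton's finite-time Muller game: a finite path such that some
set `F` reaches score `|F|! + 1`, while no set did so in a proper prefix. -/
def McNPlay (G : Arena V) (w : List V) : Prop :=
  w.Chain' G.E ∧ (∃ F : Set V, score F w = F.ncard.factorial + 1) ∧
    ∀ u : List V, u <+: w → u ≠ w →
      ∀ F : Set V, score F u ≠ F.ncard.factorial + 1

/-- Player `i` wins McNaughton's finite-time Muller game from `v`. -/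
def McNWinFrom (G : Arena V) (i : Fin 2) (𝓕i : Set (Set V)) (v : V) : Prop :=
  ∃ σ : Strategy V, G.Legal σ ∧
    ∀ w : List V, McNPlay G w → w.head? = some v → G.ConsistentFin i σ w →
      ∃ F ∈ 𝓕i, score F w = F.ncard.factorial + 1

/-- The winning region of Player `i` in McNaughton's finite-time Muller game. -/
def McNWinRegion (G : Arena V) (i : Fin 2) (𝓕i : Set (Set V)) : Set V :=
  {v | McNWinFrom G i 𝓕i v}

open Classical in
/-- The list `ρ₀ ⋯ ρₙ` of the first `n+1` vertices of the unique play that starts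
in `v` and is consistent with the strategy `σ` of Player `i` and the strategy `τ`
of the other player. -/
noncomputable def playList (G : Arena V) (i : Fin 2) (σ τ : Strategy V) (v : V) :
    ℕ → List V
  | 0 => [v]
  | n + 1 =>
      let w := playList G i σ τ v n
      let u := w.getLastD v
      w ++ [if u ∈ G.pos i then σ w.dropLast u else τ w.dropLast u]

/-- `playOf G i σ τ v` : the unique play starting in `v` that is consistent with
the strategy `σ` of Player `i` and the strategy `τ` of the other player. -/
noncomputable def playOf (G : Arena V) (i : Fin 2) (σ τ : Strategy V) (v : V)
    (n : ℕ) : V :=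
  (playList G i σ τ v n).getLastD v

private lemma flatten_chunks {α : Type*} (w : List α) (m : ℕ) : ∀ j,
    ((List.range j).map (fun i => ((w.drop (i*m)).take m))).flatten = w.take (j*m)
  | 0 => by simp
  | j+1 => by
    rw [List.range_succ, List.map_append, List.flatten_append, flatten_chunks w m j]
    simp [Nat.succ_mul, List.take_add]

private lemma len_le_flatten {α : Type*} : ∀ (xs : List (List α)),
    (∀ x ∈ xs, x ≠ []) → xs.length ≤ xs.flatten.length
  | [], _ => le_refl 0
  | x :: xs, h => by
    have h1 : 1 ≤ x.length := by
      have := h x List.mem_cons_self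
      exact Nat.pos_of_ne_zero (fun hc => this (List.length_eq_zero_iff.mp hc))
    have h2 := len_le_flatten xs (fun y hy => h y (List.mem_cons_of_mem x hy))
    simp only [List.flatten_cons, List.length_cons, List.length_append]
    omega

private lemma key_lemma {V : Type u} [Fintype V] (k : ℕ) (hk : 1 ≤ k) :
    ∀ n (w : List V), (occ w).ncard ≤ n → k ^ n ≤ w.length →
    ∃ (F : Set V) (xs : List (List V)), xs.length = k ∧
      (∀ x ∈ xs, x ≠ [] ∧ occ x = F) ∧ xs.flatten <:+: w := by
  intro n
  induction n with
  | zero =>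
    intro w h0 h1
    rw [pow_zero] at h1
    obtain ⟨v, hv⟩ := List.exists_mem_of_length_pos h1
    have hocc : occ w = ∅ := Set.ncard_eq_zero (Set.toFinite _) |>.mp (Nat.le_zero.mp h0)
    exact absurd hocc (Set.nonempty_iff_ne_empty.mp ⟨v, hv⟩)
  | succ n ih =>
    intro w hcard hlen
    set m := k ^ n with hm
    have hm1 : 1 ≤ m := Nat.one_le_pow n k hk
    have hkm : k * m ≤ w.length := by
      rw [pow_succ, mul_comm] at hlen; exact hlen
    set blocks : ℕ → List V := fun i => (w.drop (i*m)).take m with hblocks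
    have hblen : ∀ i < k, (blocks i).length = m := by
      intro i hi
      have h1 : (i+1)*m ≤ k*m := Nat.mul_le_mul_right m hi
      have h2 : (i+1)*m = i*m + m := Nat.succ_mul i m
      simp only [hblocks, List.length_take, List.length_drop]
      omega
    have hbsub : ∀ i, occ (blocks i) ⊆ occ w := by
      intro i v hv
      exact List.mem_of_mem_drop (List.mem_of_mem_take hv)
    by_cases hall : ∀ i < k, occ (blocks i) = occ w
    · refine ⟨occ w, (List.range k).map blocks, by simp, ?_, ?_⟩
      · intro x hx
        obtain ⟨i, hi, rfl⟩ := List.mem_map.mp hx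
        rw [List.mem_range] at hi
        refine ⟨?_, hall i hi⟩
        intro hc
        have := hblen i hi
        rw [hc] at this
        simp at this
        omega
      · have := flatten_chunks w m k
        rw [← hblocks] at this
        rw [this]
        exact (List.take_prefix (k*m) w).isInfix
    · push_neg at hall
      obtain ⟨i, hi, hne⟩ := hall
      have hss : occ (blocks i) ⊂ occ w := Set.ssubset_iff_subset_ne.mpr ⟨hbsub i, hne⟩
      have hlt : (occ (blocks i)).ncard < (occ w).ncard :=
        Set.ncard_lt_ncard hss (Set.toFinite _)
      have hcard' : (occ (blocks i)).ncard ≤ n := by omega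
      have hlen' : k ^ n ≤ (blocks i).length := by rw [hblen i hi]
      obtain ⟨F, xs, h1, h2, h3⟩ := ih (blocks i) hcard' hlen'
      refine ⟨F, xs, h1, h2, h3.trans ?_⟩
      exact (List.take_prefix m _).isInfix.trans (List.drop_suffix (i*m) w).isInfix

private lemma score_le_length {V : Type u} (F : Set V) (u : List V) :
    score F u ≤ u.length := by
  unfold score
  refine csSup_le ⟨0, [], rfl, by simp, List.nil_suffix⟩ ?_
  rintro b ⟨xs, rfl, hxs, hsuf⟩
  calc xs.length ≤ xs.flatten.length := len_le_flatten xs (fun x hx => (hxs x hx).1)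
    _ ≤ u.length := hsuf.length_le

/-- Every finite word `w` over the vertex set `V` with
`|w| ≥ k^|V|` (for `k ≥ 1`) satisfies `maxscore_{2^V}(w) ≥ k`. -/
theorem stmt_1 {V : Type u} [Fintype V] (k : ℕ) (hk : 1 ≤ k)
    (w : List V) (hw : k ^ Fintype.card V ≤ w.length) :
    k ≤ maxscore (Set.univ : Set (Set V)) w := by
  have hcard : (occ w).ncard ≤ Fintype.card V := by
    calc (occ w).ncard ≤ (Set.univ : Set V).ncard :=
          Set.ncard_le_ncard (Set.subset_univ _) (Set.toFinite _)
      _ = Fintype.card V := by rw [Set.ncard_univ, Nat.card_eq_fintype_card]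
  obtain ⟨F, xs, hxl, hxs, hinf⟩ := key_lemma k hk (Fintype.card V) w hcard hw
  obtain ⟨s, t, hst⟩ := hinf
  set u := s ++ xs.flatten with hu
  have hupre : u <+: w := ⟨t, by rw [hu, ← hst]⟩
  have hfne : xs.flatten ≠ [] := by
    intro hc
    have hxsne : xs ≠ [] := by intro h; rw [h] at hxl; simp at hxl; omega
    obtain ⟨x, hx⟩ := List.exists_mem_of_length_pos (by
      simp only [hxl]; exact hk : 0 < xs.length)
    exact (hxs x hx).1 (List.flatten_eq_nil_iff.mp hc x hx)
  have hune : u ≠ [] := by simp [hu, hfne]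
  have hsuf : xs.flatten <:+ u := ⟨s, rfl⟩
  have hscore : k ≤ score F u := by
    unfold score
    apply le_csSup
    · refine ⟨u.length, ?_⟩
      rintro b ⟨ys, rfl, hys, hysuf⟩
      calc ys.length ≤ ys.flatten.length := len_le_flatten ys (fun x hx => (hys x hx).1)
        _ ≤ u.length := hysuf.length_le
    · exact ⟨xs, hxl, hxs, hsuf⟩
  calc k ≤ score F u := hscore
    _ ≤ maxscore (Set.univ : Set (Set V)) w := by
        unfold maxscore
        apply le_csSup
        · refine ⟨w.length, ?_⟩
          rintro b ⟨F', _, u', hu'ne, hu'pre, rfl⟩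
          exact (score_le_length F' u').trans hu'pre.length_le
        · exact ⟨F, Set.mem_univ F, u, hune, hupre, rfl⟩
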